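/- Let (G, ≺) be a bipartite stable matching instance. Then the fractional stable matching polytope FSM(G,≺) = {x ∈ ℝ^E : x ≥ 0, x(δ(v)) ≤ 1 ∀v ∈ V, x(φ(e)) ≥ 1 ∀e ∈ E} has all vertices integral, and the integral points of FSM(G,≺) are exactly the incidence vectors of stable matchings of (G, ≺). -/

import Mathlib

open SimpleGraph

variable {V : Type*} [Fintype V] [DecidableEq V]

/-- Strict preference lists: `pref v a b` means `v` prefers `a` over `b`. -/
structure StrictPrefs (G : SimpleGraph V) (pref : V → V → V → Prop) : Prop where
  adj_left : ∀ v a b, pref v a b → G.Adj v a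
  adj_right : ∀ v a b, pref v a b → G.Adj v b
  irrefl : ∀ v a, ¬ pref v a a
  trans : ∀ v a b c, pref v a b → pref v b c → pref v a c
  total : ∀ v a b, G.Adj v a → G.Adj v b → a ≠ b → pref v a b ∨ pref v b a

/-- A set of edges is a matching if its edges are pairwise vertex-disjoint. -/
def IsMatch (M : Set (Sym2 V)) : Prop :=
  ∀ e ∈ M, ∀ f ∈ M, ∀ v : V, v ∈ e → v ∈ f → e = f

/-- `M` covers `v`. -/
def Covers (M : Set (Sym2 V)) (v : V) : Prop := ∃ e ∈ M, v ∈ e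

/-- The edge `uv` is blocking for `M`. -/
def Blocks (G : SimpleGraph V) (pref : V → V → V → Prop)
    (M : Set (Sym2 V)) (u v : V) : Prop :=
  G.Adj u v ∧ s(u, v) ∉ M ∧ (∀ w, s(u, w) ∈ M → pref u v w) ∧
    (∀ w, s(v, w) ∈ M → pref v u w)

/-- `M` is a stable matching of `(G, pref)`. -/
def IsStable (G : SimpleGraph V) (pref : V → V → V → Prop) (M : Set (Sym2 V)) : Prop :=
  IsMatch M ∧ M ⊆ G.edgeSet ∧ ∀ u v, ¬ Blocks G pref M u v

/-- `Phi G pref u v` is the set of edges dominating the edge `uv` at one of its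
endpoints, together with `uv` itself. -/
def Phi (G : SimpleGraph V) (pref : V → V → V → Prop) (u v : V) : Set (Sym2 V) :=
  {f | f ∈ G.edgeSet ∧ (f = s(u, v) ∨ (∃ w, f = s(u, w) ∧ pref u w v)
      ∨ (∃ w, f = s(v, w) ∧ pref v w u))}

/-- The set of edges appearing in some stable matching. -/
def EMset (G : SimpleGraph V) (pref : V → V → V → Prop) : Set (Sym2 V) :=
  {e | ∃ M, IsStable G pref M ∧ e ∈ M}

open scoped Classical in
/-- `x(δ(v))`. -/
noncomputable def degSum (G : SimpleGraph V) (x : Sym2 V → ℝ) (v : V) : ℝ :=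
  ∑ e ∈ G.edgeFinset, if v ∈ e then x e else 0

open scoped Classical in
/-- `x(φ(uv))`. -/
noncomputable def phiSum (G : SimpleGraph V) (pref : V → V → V → Prop)
    (x : Sym2 V → ℝ) (u v : V) : ℝ :=
  ∑ e ∈ G.edgeFinset, if e ∈ Phi G pref u v then x e else 0

/-- Membership in the fractional stable matching polytope `FSM(G, pref)`. -/
def InFSM (G : SimpleGraph V) (pref : V → V → V → Prop) (x : Sym2 V → ℝ) : Prop :=
  (∀ e, 0 ≤ x e) ∧ (∀ e, e ∉ G.edgeSet → x e = 0) ∧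
  (∀ v, degSum G x v ≤ 1) ∧ (∀ u v, G.Adj u v → 1 ≤ phiSum G pref x u v)

set_option linter.unusedSectionVars false
set_option linter.unusedVariables false
namespace VVR

open Finset

section
open scoped Classical

variable {V : Type*} [Fintype V] [DecidableEq V]

open scoped Classical in
/-- sum of `x` over edges at `u` strictly better than `v` (in `u`'s eyes). -/
noncomputable def pS (pref : V → V → V → Prop) (x : Sym2 V → ℝ) (u v : V) : ℝ :=
  ∑ w ∈ Finset.univ.filter (fun w => pref u w v), x s(u, w)

/-- the edge `uv` is fractional. -/
def Frx (x : Sym2 V → ℝ) (u v : V) : Prop := x s(u, v) ≠ 0 ∧ x s(u, v) ≠ 1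

/-- `v` is `u`'s most preferred fractional partner. -/
def VBest (pref : V → V → V → Prop) (x : Sym2 V → ℝ) (u v : V) : Prop :=
  Frx x u v ∧ ∀ w, Frx x u w → w ≠ v → pref u v w

/-- `v` is `u`'s least preferred fractional partner. -/
def VWorst (pref : V → V → V → Prop) (x : Sym2 V → ℝ) (u v : V) : Prop :=
  Frx x u v ∧ ∀ w, Frx x u w → w ≠ v → pref u w v

theorem sum_indicator_unique {α : Type*} (s : Finset α) (Q : α → Prop) [DecidablePred Q]
    (hQ : ∀ a ∈ s, ∀ b ∈ s, Q a → Q b → a = b) :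
    (∑ w ∈ s, if Q w then (1:ℝ) else 0) = if ∃ w ∈ s, Q w then 1 else 0 := by
  classical
  by_cases h : ∃ w ∈ s, Q w
  · obtain ⟨w, hws, hQw⟩ := h
    rw [if_pos ⟨w, hws, hQw⟩, Finset.sum_eq_single_of_mem w hws]
    · rw [if_pos hQw]
    · intro b hb hbw
      rw [if_neg (fun hQb => hbw (hQ b hb w hws hQb hQw))]
  · rw [if_neg h, Finset.sum_eq_zero]
    intro w hw
    rw [if_neg (fun hQw => h ⟨w, hw, hQw⟩)]

theorem degSum_eq (G : SimpleGraph V) (x : Sym2 V → ℝ) (v : V) :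
    degSum G x v = ∑ u ∈ G.neighborFinset v, x s(v, u) := by
  classical
  unfold degSum
  rw [← Finset.sum_filter]
  have himg : G.edgeFinset.filter (fun e => v ∈ e) =
      (G.neighborFinset v).image (fun u => s(v, u)) := by
    ext e
    simp only [Finset.mem_filter, Finset.mem_image, SimpleGraph.mem_neighborFinset,
      SimpleGraph.mem_edgeFinset]
    constructor
    · rintro ⟨he, hv⟩
      refine ⟨Sym2.Mem.other' hv, ?_, Sym2.other_spec' hv⟩
      have := Sym2.other_spec' hv
      rw [← this] at he
      exact (SimpleGraph.mem_edgeSet G).mp he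
    · rintro ⟨u, hu, rfl⟩
      exact ⟨(SimpleGraph.mem_edgeSet G).mpr hu, by simp⟩
  rw [himg, Finset.sum_image]
  intro a _ b _ hab
  exact (Sym2.congr_right.mp hab)

theorem phiSum_eq (G : SimpleGraph V) (pref : V → V → V → Prop)
    (hp : StrictPrefs G pref) (x : Sym2 V → ℝ) {u v : V} (h : G.Adj u v) :
    phiSum G pref x u v = x s(u, v) + pS pref x u v + pS pref x v u := by
  classical
  have hne : u ≠ v := G.ne_of_adj h
  have key : ∀ a b : V, G.Adj a b → ∀ w, pref a w b → s(a, w) ≠ s(a, b) := by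
    intro a b hab w hw heq
    rcases Sym2.eq_iff.mp heq with ⟨-, h2⟩ | ⟨h1, h2⟩
    · exact hp.irrefl a w (h2 ▸ hw)
    · exact (G.ne_of_adj hab) h1
  -- the three pieces
  set T1 : Finset (Sym2 V) :=
    (Finset.univ.filter (fun w => pref u w v)).image (fun w => s(u, w)) with hT1
  set T2 : Finset (Sym2 V) :=
    (Finset.univ.filter (fun w => pref v w u)).image (fun w => s(v, w)) with hT2
  have hmemT1 : ∀ e, e ∈ T1 ↔ ∃ w, pref u w v ∧ e = s(u, w) := by
    intro e; simp only [hT1, Finset.mem_image, Finset.mem_filter, Finset.mem_univ, true_and]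
    constructor
    · rintro ⟨w, hw, rfl⟩; exact ⟨w, hw, rfl⟩
    · rintro ⟨w, hw, rfl⟩; exact ⟨w, hw, rfl⟩
  have hmemT2 : ∀ e, e ∈ T2 ↔ ∃ w, pref v w u ∧ e = s(v, w) := by
    intro e; simp only [hT2, Finset.mem_image, Finset.mem_filter, Finset.mem_univ, true_and]
    constructor
    · rintro ⟨w, hw, rfl⟩; exact ⟨w, hw, rfl⟩
    · rintro ⟨w, hw, rfl⟩; exact ⟨w, hw, rfl⟩
  have hsplit : G.edgeFinset.filter (fun e => e ∈ Phi G pref u v)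
      = insert s(u, v) (T1 ∪ T2) := by
    ext e
    simp only [Finset.mem_filter, SimpleGraph.mem_edgeFinset, Finset.mem_insert,
      Finset.mem_union, hmemT1, hmemT2]
    constructor
    · rintro ⟨he, -, hcase⟩
      rcases hcase with rfl | ⟨w, rfl, hw⟩ | ⟨w, rfl, hw⟩
      · exact Or.inl rfl
      · exact Or.inr (Or.inl ⟨w, hw, rfl⟩)
      · exact Or.inr (Or.inr ⟨w, hw, rfl⟩)
    · rintro (rfl | ⟨w, hw, rfl⟩ | ⟨w, hw, rfl⟩)
      · exact ⟨(SimpleGraph.mem_edgeSet G).mpr h,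
          (SimpleGraph.mem_edgeSet G).mpr h, Or.inl rfl⟩
      · exact ⟨(SimpleGraph.mem_edgeSet G).mpr (hp.adj_left u w v hw),
          (SimpleGraph.mem_edgeSet G).mpr (hp.adj_left u w v hw),
          Or.inr (Or.inl ⟨w, rfl, hw⟩)⟩
      · exact ⟨(SimpleGraph.mem_edgeSet G).mpr (hp.adj_left v w u hw),
          (SimpleGraph.mem_edgeSet G).mpr (hp.adj_left v w u hw),
          Or.inr (Or.inr ⟨w, rfl, hw⟩)⟩
  have hnotmem : s(u, v) ∉ T1 ∪ T2 := by
    rw [Finset.mem_union, hmemT1, hmemT2]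
    rintro (⟨w, hw, heq⟩ | ⟨w, hw, heq⟩)
    · exact key u v h w hw heq.symm
    · exact key v u h.symm w hw (by rw [← heq, Sym2.eq_swap])
  have hdisj : Disjoint T1 T2 := by
    rw [Finset.disjoint_left]
    intro e he1 he2
    rw [hmemT1] at he1; rw [hmemT2] at he2
    obtain ⟨w1, hw1, rfl⟩ := he1
    obtain ⟨w2, hw2, heq⟩ := he2
    rcases Sym2.eq_iff.mp heq with ⟨h1, h2⟩ | ⟨h1, h2⟩
    · exact (G.ne_of_adj h) h1
    · exact hp.irrefl u v (h2 ▸ hw1)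
  have hinj1 : ∀ a ∈ Finset.univ.filter (fun w => pref u w v),
      ∀ b ∈ Finset.univ.filter (fun w => pref u w v),
      s(u, a) = s(u, b) → a = b := by
    intro a ha b hb hab
    rcases Sym2.eq_iff.mp hab with ⟨-, h2⟩ | ⟨h1, h2⟩
    · exact h2
    · exact h2.trans h1
  have hinj2 : ∀ a ∈ Finset.univ.filter (fun w => pref v w u),
      ∀ b ∈ Finset.univ.filter (fun w => pref v w u),
      s(v, a) = s(v, b) → a = b := by
    intro a ha b hb hab
    rcases Sym2.eq_iff.mp hab with ⟨-, h2⟩ | ⟨h1, h2⟩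
    · exact h2
    · exact h2.trans h1
  unfold phiSum
  rw [← Finset.sum_filter, hsplit, Finset.sum_insert hnotmem,
    Finset.sum_union hdisj, Finset.sum_image hinj1, Finset.sum_image hinj2]
  unfold pS
  ring

variable {G : SimpleGraph V} {pref : V → V → V → Prop} {x : Sym2 V → ℝ}

theorem frx_adj (hz : ∀ e, e ∉ G.edgeSet → x e = 0) {u v : V} (h : Frx x u v) :
    G.Adj u v := by
  by_contra hadj
  exact h.1 (hz _ (fun he => hadj ((SimpleGraph.mem_edgeSet G).mp he)))

theorem frx_symm {u v : V} (h : Frx x u v) : Frx x v u := by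
  unfold Frx at *; rwa [Sym2.eq_swap] at h

theorem xsymm (x : Sym2 V → ℝ) (u v : V) : x s(u, v) = x s(v, u) := by
  rw [Sym2.eq_swap]

theorem pS_nonneg (h0 : ∀ e, 0 ≤ x e) (u v : V) : 0 ≤ pS pref x u v :=
  Finset.sum_nonneg (fun w _ => h0 _)

theorem term_le_pS (h0 : ∀ e, 0 ≤ x e) {u v w : V} (h : pref u w v) :
    x s(u, w) ≤ pS pref x u v := by
  unfold pS
  apply Finset.single_le_sum (f := fun i => x s(u, i)) (fun i _ => h0 _)
  exact Finset.mem_filter.mpr ⟨Finset.mem_univ w, h⟩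

theorem pS_eq_zero_term (h0 : ∀ e, 0 ≤ x e) {u v w : V} (h : pref u w v)
    (hps : pS pref x u v = 0) : x s(u, w) = 0 :=
  le_antisymm (hps ▸ term_le_pS h0 h) (h0 _)

theorem two_le_deg (h0 : ∀ e, 0 ≤ x e) {v a b : V} (ha : G.Adj v a) (hb : G.Adj v b)
    (hab : a ≠ b) : x s(v, a) + x s(v, b) ≤ degSum G x v := by
  rw [degSum_eq]
  have hsub : {a, b} ⊆ G.neighborFinset v := by
    intro w hw
    rcases Finset.mem_insert.mp hw with rfl | hw
    · exact (SimpleGraph.mem_neighborFinset G v w).mpr ha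
    · rw [Finset.mem_singleton] at hw
      subst hw
      exact (SimpleGraph.mem_neighborFinset G v w).mpr hb
  calc x s(v, a) + x s(v, b) = ∑ w ∈ ({a, b} : Finset V), x s(v, w) := by
        rw [Finset.sum_pair hab]
    _ ≤ _ := Finset.sum_le_sum_of_subset_of_nonneg hsub (fun w _ _ => h0 _)

theorem sum3_le_deg (hp : StrictPrefs G pref) (h0 : ∀ e, 0 ≤ x e) {v u w₀ : V}
    (hadju : G.Adj v u) (hadjw : G.Adj v w₀) (hne : w₀ ≠ u) (hnp : ¬ pref v w₀ u) :
    x s(v, u) + pS pref x v u + x s(v, w₀) ≤ degSum G x v := by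
  rw [degSum_eq]
  have hsub : insert u (insert w₀ (Finset.univ.filter (fun w => pref v w u)))
      ⊆ G.neighborFinset v := by
    intro w hw
    rw [SimpleGraph.mem_neighborFinset]
    rcases Finset.mem_insert.mp hw with rfl | hw
    · exact hadju
    rcases Finset.mem_insert.mp hw with rfl | hw
    · exact hadjw
    · exact hp.adj_left v w u (Finset.mem_filter.mp hw).2
  have h1 : u ∉ insert w₀ (Finset.univ.filter (fun w => pref v w u)) := by
    simp only [Finset.mem_insert, Finset.mem_filter, Finset.mem_univ, true_and]
    rintro (rfl | hc)
    · exact hne rfl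
    · exact hp.irrefl v u hc
  have h2 : w₀ ∉ Finset.univ.filter (fun w => pref v w u) := by
    simp only [Finset.mem_filter, Finset.mem_univ, true_and]
    exact hnp
  calc x s(v, u) + pS pref x v u + x s(v, w₀)
      = ∑ w ∈ insert u (insert w₀ (Finset.univ.filter (fun w => pref v w u))),
        x s(v, w) := by
        rw [Finset.sum_insert h1, Finset.sum_insert h2]; unfold pS; ring
    _ ≤ _ := Finset.sum_le_sum_of_subset_of_nonneg hsub (fun w _ _ => h0 _)

theorem deg_split (hp : StrictPrefs G pref) {v u : V} (hadj : G.Adj v u)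
    (h : ∀ w, x s(v, w) ≠ 0 → w = u ∨ pref v w u) :
    degSum G x v = x s(v, u) + pS pref x v u := by
  rw [degSum_eq]
  have h1 : u ∉ Finset.univ.filter (fun w => pref v w u) := by
    simp only [Finset.mem_filter, Finset.mem_univ, true_and]
    exact hp.irrefl v u
  have : x s(v, u) + pS pref x v u
      = ∑ w ∈ insert u (Finset.univ.filter (fun w => pref v w u)), x s(v, w) := by
    rw [Finset.sum_insert h1]; rfl
  rw [this]
  symm
  apply Finset.sum_subset
  · intro w hw
    rw [SimpleGraph.mem_neighborFinset]
    rcases Finset.mem_insert.mp hw with rfl | hw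
    · exact hadj
    · exact hp.adj_left v w u (Finset.mem_filter.mp hw).2
  · intro w _ hw
    by_contra hxw
    rcases h w hxw with rfl | hc
    · exact hw (Finset.mem_insert_self w _)
    · exact hw (Finset.mem_insert.mpr (Or.inr
        (Finset.mem_filter.mpr ⟨Finset.mem_univ w, hc⟩)))

theorem exists_max (hp : StrictPrefs G pref) {v : V} {S : Finset V}
    (hadj : ∀ u ∈ S, G.Adj v u) (hS : S.Nonempty) :
    ∃ b ∈ S, ∀ u ∈ S, u ≠ b → pref v b u := by
  classical
  revert hadj hS
  induction S using Finset.induction_on with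
  | empty => intro _ hS; exact absurd hS (by simp)
  | @insert a S hna ih =>
    intro hadj hS
    by_cases hSe : S.Nonempty
    · obtain ⟨b, hbS, hb⟩ := ih (fun u hu => hadj u (Finset.mem_insert_of_mem hu)) hSe
      have hab : a ≠ b := fun h => hna (h ▸ hbS)
      rcases hp.total v a b (hadj a (Finset.mem_insert_self a S))
        (hadj b (Finset.mem_insert_of_mem hbS)) hab with hcase | hcase
      · refine ⟨a, Finset.mem_insert_self a S, ?_⟩
        intro u hu hua
        rcases Finset.mem_insert.mp hu with rfl | hu
        · exact absurd rfl hua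
        · by_cases hub : u = b
          · exact hub ▸ hcase
          · exact hp.trans v a b u hcase (hb u hu hub)
      · refine ⟨b, Finset.mem_insert_of_mem hbS, ?_⟩
        intro u hu hub
        rcases Finset.mem_insert.mp hu with rfl | hu
        · exact hcase
        · exact hb u hu hub
    · rw [Finset.not_nonempty_iff_eq_empty] at hSe
      subst hSe
      exact ⟨a, Finset.mem_insert_self a _, by
        intro u hu hua
        rcases Finset.mem_insert.mp hu with rfl | hu
        · exact absurd rfl hua
        · exact absurd hu (by simp)⟩

theorem flip_strictPrefs (hp : StrictPrefs G pref) :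
    StrictPrefs G (fun v a b => pref v b a) := by
  constructor
  · exact fun v a b h => hp.adj_right v b a h
  · exact fun v a b h => hp.adj_left v b a h
  · exact fun v a => hp.irrefl v a
  · exact fun v a b c h1 h2 => hp.trans v c b a h2 h1
  · exact fun v a b ha hb hne => (hp.total v a b ha hb hne).symm

theorem exists_best (hp : StrictPrefs G pref) (hz : ∀ e, e ∉ G.edgeSet → x e = 0)
    {v : V} (h : ∃ u, Frx x v u) : ∃ b, VBest pref x v b := by
  classical
  obtain ⟨u, hu⟩ := h
  have hS : (Finset.univ.filter (fun w => Frx x v w)).Nonempty :=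
    ⟨u, Finset.mem_filter.mpr ⟨Finset.mem_univ u, hu⟩⟩
  obtain ⟨b, hbS, hb⟩ := exists_max hp
    (fun w hw => frx_adj hz (Finset.mem_filter.mp hw).2) hS
  refine ⟨b, (Finset.mem_filter.mp hbS).2, ?_⟩
  intro w hw hwb
  exact hb w (Finset.mem_filter.mpr ⟨Finset.mem_univ w, hw⟩) hwb

theorem exists_worst (hp : StrictPrefs G pref) (hz : ∀ e, e ∉ G.edgeSet → x e = 0)
    {v : V} (h : ∃ u, Frx x v u) : ∃ b, VWorst pref x v b := by
  classical
  obtain ⟨u, hu⟩ := h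
  have hS : (Finset.univ.filter (fun w => Frx x v w)).Nonempty :=
    ⟨u, Finset.mem_filter.mpr ⟨Finset.mem_univ u, hu⟩⟩
  obtain ⟨b, hbS, hb⟩ := exists_max (flip_strictPrefs hp)
    (fun w hw => frx_adj hz (Finset.mem_filter.mp hw).2) hS
  refine ⟨b, (Finset.mem_filter.mp hbS).2, ?_⟩
  intro w hw hwb
  exact hb w (Finset.mem_filter.mpr ⟨Finset.mem_univ w, hw⟩) hwb

theorem best_unique (hp : StrictPrefs G pref) {v b b' : V}
    (h1 : VBest pref x v b) (h2 : VBest pref x v b') : b = b' := by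
  by_contra hne
  exact hp.irrefl v b (hp.trans v b b' b (h1.2 b' h2.1 (Ne.symm hne)) (h2.2 b h1.1 hne))

theorem worst_unique (hp : StrictPrefs G pref) {v b b' : V}
    (h1 : VWorst pref x v b) (h2 : VWorst pref x v b') : b = b' := by
  by_contra hne
  exact hp.irrefl v b (hp.trans v b b' b (h2.2 b h1.1 hne) (h1.2 b' h2.1 (Ne.symm hne)))


theorem sum2_le_deg (hp : StrictPrefs G pref) (h0 : ∀ e, 0 ≤ x e) {v u : V}
    (hadj : G.Adj v u) : x s(v, u) + pS pref x v u ≤ degSum G x v := by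
  rw [degSum_eq]
  have h1 : u ∉ Finset.univ.filter (fun w => pref v w u) := by
    simp only [Finset.mem_filter, Finset.mem_univ, true_and]
    exact hp.irrefl v u
  have hsub : insert u (Finset.univ.filter (fun w => pref v w u))
      ⊆ G.neighborFinset v := by
    intro w hw
    rw [SimpleGraph.mem_neighborFinset]
    rcases Finset.mem_insert.mp hw with rfl | hw
    · exact hadj
    · exact hp.adj_left v w u (Finset.mem_filter.mp hw).2
  calc x s(v, u) + pS pref x v u
      = ∑ w ∈ insert u (Finset.univ.filter (fun w => pref v w u)), x s(v, w) := by
        rw [Finset.sum_insert h1]; rfl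
    _ ≤ _ := Finset.sum_le_sum_of_subset_of_nonneg hsub (fun w _ _ => h0 _)

variable (hp : StrictPrefs G pref) (h0 : ∀ e, 0 ≤ x e)
  (hz : ∀ e, e ∉ G.edgeSet → x e = 0) (hdeg : ∀ v, degSum G x v ≤ 1)
  (hphi : ∀ u v, G.Adj u v → 1 ≤ phiSum G pref x u v)

include hp h0 hz hdeg hphi

theorem better_zero {m w : V} (hb : VBest pref x m w) :
    ∀ u, pref m u w → x s(m, u) = 0 := by
  intro u hu
  by_contra hxu
  have hadj : G.Adj m w := frx_adj hz hb.1
  have hadju : G.Adj m u := hp.adj_left m u w hu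
  have hne : u ≠ w := fun h => hp.irrefl m w (h ▸ hu)
  by_cases hf : Frx x m u
  · exact hp.irrefl m u (hp.trans m u w u hu (hb.2 u hf hne))
  · have hx1 : x s(m, u) = 1 := by
      rcases not_and_or.mp hf with h | h
      · exact absurd (not_not.mp h) hxu
      · exact not_not.mp h
    have h2 := two_le_deg h0 hadju hadj hne
    have hxw : 0 < x s(m, w) := lt_of_le_of_ne (h0 _) (Ne.symm hb.1.1)
    have h3 := hdeg m
    rw [hx1] at h2
    linarith

theorem best_main {m w : V} (hb : VBest pref x m w) :
    VWorst pref x w m ∧ degSum G x w = 1 := by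
  have hadj : G.Adj m w := frx_adj hz hb.1
  have hps : pS pref x m w = 0 := by
    apply Finset.sum_eq_zero
    intro u hu
    exact better_zero hp h0 hz hdeg hphi hb u (Finset.mem_filter.mp hu).2
  have h1 : 1 ≤ x s(w, m) + pS pref x w m := by
    have := hphi m w hadj
    rw [phiSum_eq G pref hp x hadj, hps, xsymm x m w] at this
    linarith
  have h2 := sum2_le_deg hp h0 (v := w) (u := m) hadj.symm
  have h3 := hdeg w
  have hdw : degSum G x w = 1 := le_antisymm h3 (le_trans h1 h2)
  have heq : x s(w, m) + pS pref x w m = 1 := le_antisymm (hdw ▸ h2) h1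
  refine ⟨⟨frx_symm hb.1, ?_⟩, hdw⟩
  intro a ha hanem
  by_contra hnp
  have hadja : G.Adj w a := frx_adj hz ha
  have h4 := sum3_le_deg hp h0 (v := w) (u := m) (w₀ := a) hadj.symm hadja hanem hnp
  have hxa : 0 < x s(w, a) := lt_of_le_of_ne (h0 _) (Ne.symm ha.1)
  linarith

theorem worst_best {v u : V} (h : VWorst pref x v u) : VBest pref x u v := by
  classical
  set F : Finset V := Finset.univ.filter (fun a => ∃ b, Frx x a b) with hF
  have hmem : ∀ a b, Frx x a b → a ∈ F := fun a b hab =>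
    Finset.mem_filter.mpr ⟨Finset.mem_univ a, ⟨b, hab⟩⟩
  set g : V → V := fun a =>
    if ha : ∃ b, Frx x a b then Classical.choose (exists_best hp hz ha) else a with hg
  have hgb : ∀ a, a ∈ F → VBest pref x a (g a) := by
    intro a ha
    have ha' : ∃ b, Frx x a b := (Finset.mem_filter.mp ha).2
    simp only [hg, dif_pos ha']
    exact Classical.choose_spec (exists_best hp hz ha')
  have hmaps : ∀ a (ha : a ∈ F), g a ∈ F :=
    fun a ha => hmem _ a (frx_symm (hgb a ha).1)
  have hinj : ∀ a₁ a₂ (ha₁ : a₁ ∈ F) (ha₂ : a₂ ∈ F), g a₁ = g a₂ → a₁ = a₂ := by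
    intro a₁ a₂ ha₁ ha₂ heq
    have hw₁ := (best_main hp h0 hz hdeg hphi (hgb a₁ ha₁)).1
    have hw₂ := (best_main hp h0 hz hdeg hphi (hgb a₂ ha₂)).1
    rw [heq] at hw₁
    exact (worst_unique hp hw₁ hw₂)
  have hvF : v ∈ F := hmem v u h.1
  obtain ⟨a, ha, hav⟩ := Finset.surj_on_of_inj_on_of_card_le (fun a _ => g a)
    hmaps hinj le_rfl v hvF
  have hbav : VBest pref x a v := hav ▸ hgb a ha
  have hwva : VWorst pref x v a := (best_main hp h0 hz hdeg hphi hbav).1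
  have : a = u := worst_unique hp hwva h
  exact this ▸ hbav

theorem best_worst {m w : V} (hb : VBest pref x m w) : VWorst pref x w m :=
  (best_main hp h0 hz hdeg hphi hb).1

theorem frac_deg_one {v : V} (h : ∃ u, Frx x v u) : degSum G x v = 1 := by
  obtain ⟨u₀, hu₀⟩ := exists_worst hp hz h
  exact (best_main hp h0 hz hdeg hphi (worst_best hp h0 hz hdeg hphi hu₀)).2

theorem frac_pos_frx {v u : V} (h : ∃ w, Frx x v w) (hxu : x s(v, u) ≠ 0) :
    Frx x v u := by
  refine ⟨hxu, ?_⟩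
  intro hx1
  obtain ⟨w₀, hw₀⟩ := h
  have hne : u ≠ w₀ := fun heq => hw₀.2 (heq ▸ hx1)
  have hadju : G.Adj v u := by
    by_contra hadj
    exact hxu (hz _ (fun he => hadj ((SimpleGraph.mem_edgeSet G).mp he)))
  have hadjw : G.Adj v w₀ := frx_adj hz hw₀
  have h2 := two_le_deg h0 hadju hadjw hne
  have hxw : 0 < x s(v, w₀) := lt_of_le_of_ne (h0 _) (Ne.symm hw₀.1)
  have h3 := hdeg v
  rw [hx1] at h2
  linarith


omit hp h0 hz hdeg hphi in
theorem pS_pos_witness (hps : 0 < pS pref x a c) :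
    ∃ w, pref a w c ∧ x s(a, w) ≠ 0 := by
  by_contra hc
  push_neg at hc
  have : pS pref x a c = 0 := Finset.sum_eq_zero (fun w hw =>
    hc w (Finset.mem_filter.mp hw).2)
  rw [this] at hps
  exact lt_irrefl 0 hps

theorem tight1 {u v : V} (hadj : G.Adj u v) (ht : phiSum G pref x u v = 1)
    (hB : ∃ b, VBest pref x u b ∧ (b = v ∨ pref u b v))
    (hW : ¬ ∃ w, VWorst pref x u w ∧ (w = v ∨ pref u w v)) :
    (∃ b, VBest pref x v b ∧ pref v b u) ∧
      ¬ ∃ w, VWorst pref x v w ∧ pref v w u := by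
  obtain ⟨b, hb, hbv⟩ := hB
  have hufrac : ∃ w, Frx x u w := ⟨b, hb.1⟩
  obtain ⟨w₀, hw₀⟩ := exists_worst hp hz hufrac
  have hW' : ¬ (w₀ = v ∨ pref u w₀ v) := fun hc => hW ⟨w₀, hw₀, hc⟩
  push_neg at hW'
  obtain ⟨hw₀v, hnp⟩ := hW'
  have hadjw₀ : G.Adj u w₀ := frx_adj hz hw₀.1
  have h1 := sum3_le_deg hp h0 hadj hadjw₀ hw₀v hnp
  have hdu : degSum G x u = 1 := frac_deg_one hp h0 hz hdeg hphi hufrac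
  have ht' : x s(u, v) + pS pref x u v + pS pref x v u = 1 := by
    rw [phiSum_eq G pref hp x hadj] at ht
    linarith
  have hxw₀ : 0 < x s(u, w₀) := lt_of_le_of_ne (h0 _) (Ne.symm hw₀.1.1)
  have hpvu : 0 < pS pref x v u := by linarith
  obtain ⟨w₁, hw₁p, hw₁x⟩ := pS_pos_witness hpvu
  have hcontra : ¬ (x s(u, v) = 0 ∧ pS pref x u v = 0) := by
    rintro ⟨hx0, hps0⟩
    rcases hbv with rfl | hbv
    · exact hb.1.1 hx0
    · exact hb.1.1 (pS_eq_zero_term h0 hbv hps0)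
  have hvfrac : ∃ w, Frx x v w := by
    by_contra hnf
    push_neg at hnf
    have hx1 : x s(v, w₁) = 1 := by
      rcases not_and_or.mp (hnf w₁) with h | h
      · exact absurd (not_not.mp h) hw₁x
      · exact not_not.mp h
    have hge : (1:ℝ) ≤ pS pref x v u := hx1 ▸ term_le_pS h0 hw₁p
    have hn1 := h0 s(u, v)
    have hn2 := pS_nonneg h0 (pref := pref) u v
    exact hcontra ⟨by linarith, by linarith⟩
  have hfw₁ : Frx x v w₁ := frac_pos_frx hp h0 hz hdeg hphi hvfrac hw₁x
  obtain ⟨b', hb'⟩ := exists_best hp hz hvfrac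
  have hb'u : pref v b' u := by
    by_cases hbw : b' = w₁
    · exact hbw ▸ hw₁p
    · exact hp.trans v b' w₁ u (hb'.2 w₁ hfw₁ (fun he => hbw he.symm)) hw₁p
  refine ⟨⟨b', hb', hb'u⟩, ?_⟩
  rintro ⟨w₂, hw₂, hw₂u⟩
  have hall : ∀ w, x s(v, w) ≠ 0 → pref v w u := by
    intro w hxw
    have hf := frac_pos_frx hp h0 hz hdeg hphi hvfrac hxw
    by_cases hww : w = w₂
    · exact hww ▸ hw₂u
    · exact hp.trans v w w₂ u (hw₂.2 w hf hww) hw₂u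
  have hds := deg_split hp hadj.symm (fun w hxw => Or.inr (hall w hxw))
  have hdv : degSum G x v = 1 := frac_deg_one hp h0 hz hdeg hphi hvfrac
  have hxsym : x s(u, v) = x s(v, u) := xsymm x u v
  have hpsuv0 : pS pref x u v = 0 := by
    have hn2 := pS_nonneg h0 (pref := pref) u v
    linarith
  rcases hbv with hbv | hbv
  · have hbuv : VBest pref x u v := hbv ▸ hb
    have hwvu : VWorst pref x v u := best_worst hp h0 hz hdeg hphi hbuv
    have huw₂ : u = w₂ := worst_unique hp hwvu hw₂
    exact hp.irrefl v u (by rwa [← huw₂] at hw₂u)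
  · exact hb.1.1 (pS_eq_zero_term h0 hbv hpsuv0)

theorem tight2 {u v : V} (hadj : G.Adj u v) (ht : phiSum G pref x u v = 1)
    (hB : ∃ b, VBest pref x v b ∧ pref v b u)
    (hW : ¬ ∃ w, VWorst pref x v w ∧ pref v w u) :
    (∃ b, VBest pref x u b ∧ (b = v ∨ pref u b v)) ∧
      ¬ ∃ w, VWorst pref x u w ∧ (w = v ∨ pref u w v) := by
  obtain ⟨b, hb, hbu⟩ := hB
  have hvfrac : ∃ w, Frx x v w := ⟨b, hb.1⟩
  obtain ⟨w₀, hw₀⟩ := exists_worst hp hz hvfrac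
  have hnp : ¬ pref v w₀ u := fun hc => hW ⟨w₀, hw₀, hc⟩
  have ht' : x s(u, v) + pS pref x u v + pS pref x v u = 1 := by
    rw [phiSum_eq G pref hp x hadj] at ht
    linarith
  have hxsym : x s(u, v) = x s(v, u) := xsymm x u v
  by_cases hw₀u : w₀ = u
  · have hw₀' : VWorst pref x v u := hw₀u ▸ hw₀
    have hbu' : VBest pref x u v := worst_best hp h0 hz hdeg hphi hw₀'
    refine ⟨⟨v, hbu', Or.inl rfl⟩, ?_⟩
    rintro ⟨w₂, hw₂, hw₂v⟩
    rcases hw₂v with hw₂v | hw₂v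
    · have hw₂' : VWorst pref x u v := hw₂v ▸ hw₂
      have hbvu : VBest pref x v u := worst_best hp h0 hz hdeg hphi hw₂'
      have hbeq : b = u := best_unique hp hb hbvu
      exact hp.irrefl v u (hbeq ▸ hbu)
    · have hne : w₂ ≠ v := fun h => hp.irrefl u v (h ▸ hw₂v)
      exact hp.irrefl u w₂ (hp.trans u w₂ v w₂ hw₂v (hbu'.2 w₂ hw₂.1 hne))
  · have hadjw₀ : G.Adj v w₀ := frx_adj hz hw₀.1
    have h1 := sum3_le_deg hp h0 (v := v) (u := u) (w₀ := w₀) hadj.symm hadjw₀ hw₀u hnp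
    have hdv : degSum G x v = 1 := frac_deg_one hp h0 hz hdeg hphi hvfrac
    have hxw₀ : 0 < x s(v, w₀) := lt_of_le_of_ne (h0 _) (Ne.symm hw₀.1.1)
    have hpuv : 0 < pS pref x u v := by linarith
    obtain ⟨w₁, hw₁p, hw₁x⟩ := pS_pos_witness hpuv
    have hxb : x s(v, b) ≠ 0 := hb.1.1
    have hufrac : ∃ w, Frx x u w := by
      by_contra hnf
      push_neg at hnf
      have hx1 : x s(u, w₁) = 1 := by
        rcases not_and_or.mp (hnf w₁) with h | h
        · exact absurd (not_not.mp h) hw₁x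
        · exact not_not.mp h
      have hge : (1:ℝ) ≤ pS pref x u v := hx1 ▸ term_le_pS h0 hw₁p
      have hn1 := h0 s(v, u)
      have hn2 := pS_nonneg h0 (pref := pref) v u
      exact hxb (pS_eq_zero_term h0 hbu (by linarith))
    have hfw₁ : Frx x u w₁ := frac_pos_frx hp h0 hz hdeg hphi hufrac hw₁x
    obtain ⟨b₂, hb₂⟩ := exists_best hp hz hufrac
    have hb₂v : pref u b₂ v := by
      by_cases hbw : b₂ = w₁
      · exact hbw ▸ hw₁p
      · exact hp.trans u b₂ w₁ v (hb₂.2 w₁ hfw₁ (fun he => hbw he.symm)) hw₁p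
    refine ⟨⟨b₂, hb₂, Or.inr hb₂v⟩, ?_⟩
    rintro ⟨w₂, hw₂, hw₂v⟩
    have hall : ∀ w, x s(u, w) ≠ 0 → w = v ∨ pref u w v := by
      intro w hxw
      have hf := frac_pos_frx hp h0 hz hdeg hphi hufrac hxw
      by_cases hww : w = w₂
      · exact hww ▸ hw₂v
      · rcases hw₂v with hw₂v | hw₂v
        · exact Or.inr (hw₂v ▸ hw₂.2 w hf hww)
        · exact Or.inr (hp.trans u w w₂ v (hw₂.2 w hf hww) hw₂v)
    have hds := deg_split hp hadj hall
    have hdu : degSum G x u = 1 := frac_deg_one hp h0 hz hdeg hphi hufrac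
    have hn2 := pS_nonneg h0 (pref := pref) v u
    exact hxb (pS_eq_zero_term h0 hbu (by linarith))


omit hp h0 hz hdeg hphi in
theorem ind_split {P Q R : Prop} [Decidable P] [Decidable Q] [Decidable R]
    (hiff : R ↔ P ∨ Q) (h : ¬ (P ∧ Q)) :
    (if R then (1:ℝ) else 0) = (if P then 1 else 0) + (if Q then 1 else 0) := by
  by_cases hP : P
  · have hnQ : ¬ Q := fun hQ => h ⟨hP, hQ⟩
    rw [if_pos (hiff.mpr (Or.inl hP)), if_pos hP, if_neg hnQ]; ring
  · by_cases hQ : Q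
    · rw [if_pos (hiff.mpr (Or.inr hQ)), if_neg hP, if_pos hQ]; ring
    · rw [if_neg (fun hR => (hiff.mp hR).elim hP hQ), if_neg hP, if_neg hQ]; ring

omit hp h0 hz hdeg hphi in
theorem Phi_symm (u v : V) : Phi G pref u v = Phi G pref v u := by
  ext f
  simp only [Phi, Set.mem_setOf_eq]
  constructor
  · rintro ⟨he, h⟩
    refine ⟨he, ?_⟩
    rcases h with h | h | h
    · exact Or.inl (by rw [h, Sym2.eq_swap])
    · exact Or.inr (Or.inr h)
    · exact Or.inr (Or.inl h)
  · rintro ⟨he, h⟩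
    refine ⟨he, ?_⟩
    rcases h with h | h | h
    · exact Or.inl (by rw [h, Sym2.eq_swap])
    · exact Or.inr (Or.inr h)
    · exact Or.inr (Or.inl h)

omit hp h0 hz hdeg hphi in
theorem phiSum_symm (y : Sym2 V → ℝ) (u v : V) :
    phiSum G pref y u v = phiSum G pref y v u := by
  unfold phiSum
  apply Finset.sum_congr rfl
  intro e he
  have : (e ∈ Phi G pref u v) = (e ∈ Phi G pref v u) := by rw [Phi_symm]
  rw [this]

end

section
open scoped Classical
variable {V : Type*} [Fintype V] [DecidableEq V]

open scoped Classical in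
noncomputable def del (pref : V → V → V → Prop) (x : Sym2 V → ℝ) (c : V → Fin 2)
    (a b : V) : ℝ :=
  (if c a = 0 then 1 else -1) *
    ((if VBest pref x a b then 1 else 0) - (if VWorst pref x a b then 1 else 0))

open scoped Classical in
noncomputable def dd (pref : V → V → V → Prop) (x : Sym2 V → ℝ) (c : V → Fin 2) :
    Sym2 V → ℝ :=
  Sym2.lift ⟨fun a b => (del pref x c a b + del pref x c b a) / 2,
    fun a b => by ring⟩

theorem dd_mk (pref : V → V → V → Prop) (x : Sym2 V → ℝ) (c : V → Fin 2) (a b : V) :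
    dd pref x c s(a, b) = (del pref x c a b + del pref x c b a) / 2 := by
  unfold dd
  rw [Sym2.lift_mk]

theorem del_bound (pref : V → V → V → Prop) (x : Sym2 V → ℝ) (c : V → Fin 2)
    (a b : V) : |del pref x c a b| ≤ 1 := by
  unfold del
  split_ifs <;> norm_num

theorem dd_bound (pref : V → V → V → Prop) (x : Sym2 V → ℝ) (c : V → Fin 2)
    (e : Sym2 V) : |dd pref x c e| ≤ 1 := by
  induction e using Sym2.ind with
  | _ a b =>
    rw [dd_mk]
    have h1 := abs_add_le (del pref x c a b) (del pref x c b a)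
    have h2 := del_bound pref x c a b
    have h3 := del_bound pref x c b a
    rw [abs_div]
    have h4 : |(2:ℝ)| = 2 := by norm_num
    rw [h4]
    linarith

theorem fin2_cases {i j : Fin 2} (h : i ≠ j) :
    (i = 0 ∧ j ≠ 0) ∨ (i ≠ 0 ∧ j = 0) := by
  fin_cases i <;> fin_cases j <;> simp_all

variable {G : SimpleGraph V} {pref : V → V → V → Prop} {x : Sym2 V → ℝ} {c : V → Fin 2}

theorem del_zero_of_not_adj (hz : ∀ e, e ∉ G.edgeSet → x e = 0) {a b : V}
    (h : ¬ G.Adj a b) : del pref x c a b = 0 := by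
  unfold del
  rw [if_neg (fun hb : VBest pref x a b => h (frx_adj hz hb.1)),
    if_neg (fun hw : VWorst pref x a b => h (frx_adj hz hw.1))]
  ring

variable (hp : StrictPrefs G pref) (h0 : ∀ e, 0 ≤ x e)
  (hz : ∀ e, e ∉ G.edgeSet → x e = 0) (hdeg : ∀ v, degSum G x v ≤ 1)
  (hphi : ∀ u v, G.Adj u v → 1 ≤ phiSum G pref x u v)
  (hc : ∀ a b, G.Adj a b → c a ≠ c b)

include hp h0 hz hdeg hphi hc

theorem del_symm (a b : V) : del pref x c a b = del pref x c b a := by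
  by_cases hadj : G.Adj a b
  · have hne := hc a b hadj
    have h1 : (if VBest pref x a b then (1:ℝ) else 0)
        = (if VWorst pref x b a then 1 else 0) := by
      by_cases h : VBest pref x a b
      · rw [if_pos h, if_pos (best_worst hp h0 hz hdeg hphi h)]
      · rw [if_neg h, if_neg (fun hw => h (worst_best hp h0 hz hdeg hphi hw))]
    have h2 : (if VWorst pref x a b then (1:ℝ) else 0)
        = (if VBest pref x b a then 1 else 0) := by
      by_cases h : VWorst pref x a b
      · rw [if_pos h, if_pos (worst_best hp h0 hz hdeg hphi h)]
      · rw [if_neg h, if_neg (fun hw => h (best_worst hp h0 hz hdeg hphi hw))]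
    unfold del
    rcases fin2_cases hne with ⟨ha0, hb0⟩ | ⟨ha0, hb0⟩
    · rw [if_pos ha0, if_neg hb0, h1, h2]; ring
    · rw [if_neg ha0, if_pos hb0, h1, h2]; ring
  · rw [del_zero_of_not_adj hz hadj,
      del_zero_of_not_adj hz (fun h => hadj h.symm)]

theorem dd_apply (a b : V) : dd pref x c s(a, b) = del pref x c a b := by
  rw [dd_mk, ← del_symm hp h0 hz hdeg hphi hc a b]
  ring

theorem degSum_dd_zero (v : V) : degSum G (dd pref x c) v = 0 := by
  rw [degSum_eq]
  have hterm : ∀ u ∈ G.neighborFinset v, dd pref x c s(v, u)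
      = (if c v = 0 then (1:ℝ) else -1) *
        ((if VBest pref x v u then 1 else 0) - (if VWorst pref x v u then 1 else 0)) := by
    intro u _
    rw [dd_apply hp h0 hz hdeg hphi hc]
    rfl
  rw [Finset.sum_congr rfl hterm, ← Finset.mul_sum, Finset.sum_sub_distrib]
  rw [sum_indicator_unique _ _ (fun a _ b _ ha hb => best_unique hp ha hb),
    sum_indicator_unique _ _ (fun a _ b _ ha hb => worst_unique hp ha hb)]
  have hiff : (∃ w ∈ G.neighborFinset v, VBest pref x v w)
      ↔ (∃ w ∈ G.neighborFinset v, VWorst pref x v w) := by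
    constructor
    · rintro ⟨w, -, hw⟩
      obtain ⟨w', hw'⟩ := exists_worst hp hz ⟨w, hw.1⟩
      exact ⟨w', (SimpleGraph.mem_neighborFinset G v w').mpr (frx_adj hz hw'.1), hw'⟩
    · rintro ⟨w, -, hw⟩
      obtain ⟨w', hw'⟩ := exists_best hp hz ⟨w, hw.1⟩
      exact ⟨w', (SimpleGraph.mem_neighborFinset G v w').mpr (frx_adj hz hw'.1), hw'⟩
  rw [if_congr hiff rfl rfl]
  ring

theorem pS_dd_eq (u v : V) (hcu : c u = 0) :
    pS pref (dd pref x c) u v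
      = (if (∃ w, VBest pref x u w ∧ pref u w v) then (1:ℝ) else 0)
        - (if (∃ w, VWorst pref x u w ∧ pref u w v) then 1 else 0) := by
  unfold pS
  have hterm : ∀ w ∈ Finset.univ.filter (fun w => pref u w v), dd pref x c s(u, w)
      = (if VBest pref x u w then (1:ℝ) else 0)
        - (if VWorst pref x u w then 1 else 0) := by
    intro w _
    rw [dd_apply hp h0 hz hdeg hphi hc]
    unfold del
    rw [if_pos hcu]
    ring
  rw [Finset.sum_congr rfl hterm, Finset.sum_sub_distrib]
  rw [sum_indicator_unique _ _ (fun a _ b _ ha hb => best_unique hp ha hb),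
    sum_indicator_unique _ _ (fun a _ b _ ha hb => worst_unique hp ha hb)]
  have h1 : (∃ w ∈ Finset.univ.filter (fun w => pref u w v), VBest pref x u w)
      ↔ (∃ w, VBest pref x u w ∧ pref u w v) := by
    constructor
    · rintro ⟨w, hw, hbw⟩
      exact ⟨w, hbw, (Finset.mem_filter.mp hw).2⟩
    · rintro ⟨w, hbw, hw⟩
      exact ⟨w, Finset.mem_filter.mpr ⟨Finset.mem_univ w, hw⟩, hbw⟩
  have h2 : (∃ w ∈ Finset.univ.filter (fun w => pref u w v), VWorst pref x u w)
      ↔ (∃ w, VWorst pref x u w ∧ pref u w v) := by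
    constructor
    · rintro ⟨w, hw, hbw⟩
      exact ⟨w, hbw, (Finset.mem_filter.mp hw).2⟩
    · rintro ⟨w, hbw, hw⟩
      exact ⟨w, Finset.mem_filter.mpr ⟨Finset.mem_univ w, hw⟩, hbw⟩
  rw [if_congr h1 rfl rfl, if_congr h2 rfl rfl]

theorem pS_dd_eq' (u v : V) (hcu : c u ≠ 0) :
    pS pref (dd pref x c) u v
      = (if (∃ w, VWorst pref x u w ∧ pref u w v) then (1:ℝ) else 0)
        - (if (∃ w, VBest pref x u w ∧ pref u w v) then 1 else 0) := by
  unfold pS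
  have hterm : ∀ w ∈ Finset.univ.filter (fun w => pref u w v), dd pref x c s(u, w)
      = (if VWorst pref x u w then (1:ℝ) else 0)
        - (if VBest pref x u w then 1 else 0) := by
    intro w _
    rw [dd_apply hp h0 hz hdeg hphi hc]
    unfold del
    rw [if_neg hcu]
    ring
  rw [Finset.sum_congr rfl hterm, Finset.sum_sub_distrib]
  rw [sum_indicator_unique _ _ (fun a _ b _ ha hb => worst_unique hp ha hb),
    sum_indicator_unique _ _ (fun a _ b _ ha hb => best_unique hp ha hb)]
  have h1 : (∃ w ∈ Finset.univ.filter (fun w => pref u w v), VBest pref x u w)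
      ↔ (∃ w, VBest pref x u w ∧ pref u w v) := by
    constructor
    · rintro ⟨w, hw, hbw⟩
      exact ⟨w, hbw, (Finset.mem_filter.mp hw).2⟩
    · rintro ⟨w, hbw, hw⟩
      exact ⟨w, Finset.mem_filter.mpr ⟨Finset.mem_univ w, hw⟩, hbw⟩
  have h2 : (∃ w ∈ Finset.univ.filter (fun w => pref u w v), VWorst pref x u w)
      ↔ (∃ w, VWorst pref x u w ∧ pref u w v) := by
    constructor
    · rintro ⟨w, hw, hbw⟩
      exact ⟨w, hbw, (Finset.mem_filter.mp hw).2⟩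
    · rintro ⟨w, hbw, hw⟩
      exact ⟨w, Finset.mem_filter.mpr ⟨Finset.mem_univ w, hw⟩, hbw⟩
  rw [if_congr h1 rfl rfl, if_congr h2 rfl rfl]

theorem phiSum_dd_eq {u v : V} (hadj : G.Adj u v) (hcu : c u = 0) :
    phiSum G pref (dd pref x c) u v
      = ((if VBest pref x u v then (1:ℝ) else 0)
          - (if VWorst pref x u v then 1 else 0))
        + ((if (∃ w, VBest pref x u w ∧ pref u w v) then (1:ℝ) else 0)
          - (if (∃ w, VWorst pref x u w ∧ pref u w v) then 1 else 0))
        - ((if (∃ w, VBest pref x v w ∧ pref v w u) then (1:ℝ) else 0)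
          - (if (∃ w, VWorst pref x v w ∧ pref v w u) then 1 else 0)) := by
  have hcv : c v ≠ 0 := by
    intro h
    exact hc u v hadj (hcu.trans h.symm)
  rw [phiSum_eq G pref hp (dd pref x c) hadj,
    pS_dd_eq hp h0 hz hdeg hphi hc u v hcu,
    pS_dd_eq' hp h0 hz hdeg hphi hc v u hcv,
    dd_apply hp h0 hz hdeg hphi hc]
  unfold del
  rw [if_pos hcu]
  ring


omit hc in
theorem wge_imp_bge {u v : V}
    (h : ∃ w, VWorst pref x u w ∧ (w = v ∨ pref u w v)) :
    ∃ b, VBest pref x u b ∧ (b = v ∨ pref u b v) := by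
  obtain ⟨w, hw, hwv⟩ := h
  obtain ⟨b, hb⟩ := exists_best hp hz ⟨w, hw.1⟩
  refine ⟨b, hb, ?_⟩
  by_cases hbw : b = w
  · exact hbw ▸ hwv
  · have hpbw : pref u b w := hb.2 w hw.1 (fun he => hbw he.symm)
    rcases hwv with hwv | hwv
    · exact Or.inr (hwv ▸ hpbw)
    · exact Or.inr (hp.trans u b w v hpbw hwv)

omit hc in
theorem wgt_imp_bgt {v u : V} (h : ∃ w, VWorst pref x v w ∧ pref v w u) :
    ∃ b, VBest pref x v b ∧ pref v b u := by
  obtain ⟨w, hw, hwv⟩ := h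
  obtain ⟨b, hb⟩ := exists_best hp hz ⟨w, hw.1⟩
  refine ⟨b, hb, ?_⟩
  by_cases hbw : b = w
  · exact hbw ▸ hwv
  · exact hp.trans v b w u (hb.2 w hw.1 (fun he => hbw he.symm)) hwv

theorem phiSum_dd_tight_zero {u v : V} (hadj : G.Adj u v) (hcu : c u = 0)
    (ht : phiSum G pref x u v = 1) :
    phiSum G pref (dd pref x c) u v = 0 := by
  rw [phiSum_dd_eq hp h0 hz hdeg hphi hc hadj hcu]
  have hBieq : (∃ b, VBest pref x u b ∧ (b = v ∨ pref u b v)) ↔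
      (VBest pref x u v ∨ ∃ w, VBest pref x u w ∧ pref u w v) := by
    constructor
    · rintro ⟨b, hb, hbv | hbv⟩
      · exact Or.inl (hbv ▸ hb)
      · exact Or.inr ⟨b, hb, hbv⟩
    · rintro (h | ⟨b, hb, hbv⟩)
      · exact ⟨v, h, Or.inl rfl⟩
      · exact ⟨b, hb, Or.inr hbv⟩
  have hWieq : (∃ w, VWorst pref x u w ∧ (w = v ∨ pref u w v)) ↔
      (VWorst pref x u v ∨ ∃ w, VWorst pref x u w ∧ pref u w v) := by
    constructor
    · rintro ⟨b, hb, hbv | hbv⟩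
      · exact Or.inl (hbv ▸ hb)
      · exact Or.inr ⟨b, hb, hbv⟩
    · rintro (h | ⟨b, hb, hbv⟩)
      · exact ⟨v, h, Or.inl rfl⟩
      · exact ⟨b, hb, Or.inr hbv⟩
  have hBexcl : ¬ (VBest pref x u v ∧ ∃ w, VBest pref x u w ∧ pref u w v) := by
    rintro ⟨h1, w, h2, h3⟩
    exact hp.irrefl u v (best_unique hp h2 h1 ▸ h3)
  have hWexcl : ¬ (VWorst pref x u v ∧ ∃ w, VWorst pref x u w ∧ pref u w v) := by
    rintro ⟨h1, w, h2, h3⟩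
    exact hp.irrefl u v (worst_unique hp h2 h1 ▸ h3)
  have E1 : (if (∃ b, VBest pref x u b ∧ (b = v ∨ pref u b v)) then (1:ℝ) else 0)
      = (if VBest pref x u v then 1 else 0)
        + (if ∃ w, VBest pref x u w ∧ pref u w v then 1 else 0) := by
    exact ind_split hBieq hBexcl
  have E2 : (if (∃ w, VWorst pref x u w ∧ (w = v ∨ pref u w v)) then (1:ℝ) else 0)
      = (if VWorst pref x u v then 1 else 0)
        + (if ∃ w, VWorst pref x u w ∧ pref u w v then 1 else 0) := by
    exact ind_split hWieq hWexcl
  by_cases hA : (∃ b, VBest pref x u b ∧ (b = v ∨ pref u b v)) ∧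
      ¬ ∃ w, VWorst pref x u w ∧ (w = v ∨ pref u w v)
  · obtain ⟨hBGT', hnWGT'⟩ := tight1 hp h0 hz hdeg hphi hadj ht hA.1 hA.2
    rw [if_pos hA.1] at E1
    rw [if_neg hA.2] at E2
    rw [if_pos hBGT', if_neg hnWGT']
    linarith
  · have hA2 : ¬ ((∃ b, VBest pref x v b ∧ pref v b u) ∧
        ¬ ∃ w, VWorst pref x v w ∧ pref v w u) := by
      rintro ⟨h1, h2⟩
      exact hA (tight2 hp h0 hz hdeg hphi hadj ht h1 h2)
    have hiff1 : (∃ b, VBest pref x u b ∧ (b = v ∨ pref u b v)) ↔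
        (∃ w, VWorst pref x u w ∧ (w = v ∨ pref u w v)) := by
      constructor
      · intro h
        by_contra h2
        exact hA ⟨h, h2⟩
      · exact wge_imp_bge hp h0 hz hdeg hphi
    have hiff2 : (∃ b, VBest pref x v b ∧ pref v b u) ↔
        (∃ w, VWorst pref x v w ∧ pref v w u) := by
      constructor
      · intro h
        by_contra h2
        exact hA2 ⟨h, h2⟩
      · exact wgt_imp_bgt hp h0 hz hdeg hphi
    rw [if_congr hiff2 rfl rfl]
    have E3 := E1
    rw [if_congr hiff1 rfl rfl] at E3
    linarith

theorem phiSum_dd_bound {u v : V} (hadj : G.Adj u v) (hcu : c u = 0) :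
    |phiSum G pref (dd pref x c) u v| ≤ 3 := by
  rw [phiSum_dd_eq hp h0 hz hdeg hphi hc hadj hcu]
  split_ifs <;> norm_num

omit hp h0 hz hdeg hphi hc in
theorem fin2_zero {i : Fin 2} (h : i ≠ 0) : i = 1 := by
  revert h
  revert i
  decide

theorem phiSum_dd_tight_zero' {u v : V} (hadj : G.Adj u v)
    (ht : phiSum G pref x u v = 1) :
    phiSum G pref (dd pref x c) u v = 0 := by
  by_cases hcu : c u = 0
  · exact phiSum_dd_tight_zero hp h0 hz hdeg hphi hc hadj hcu ht
  · have hcv : c v = 0 := by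
      by_contra hcv
      exact hc u v hadj ((fin2_zero hcu).trans (fin2_zero hcv).symm)
    rw [phiSum_symm]
    exact phiSum_dd_tight_zero hp h0 hz hdeg hphi hc hadj.symm hcv
      ((phiSum_symm (G := G) (pref := pref) x u v) ▸ ht)

theorem phiSum_dd_bound' {u v : V} (hadj : G.Adj u v) :
    |phiSum G pref (dd pref x c) u v| ≤ 3 := by
  by_cases hcu : c u = 0
  · exact phiSum_dd_bound hp h0 hz hdeg hphi hc hadj hcu
  · have hcv : c v = 0 := by
      by_contra hcv
      exact hc u v hadj ((fin2_zero hcu).trans (fin2_zero hcv).symm)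
    rw [phiSum_symm]
    exact phiSum_dd_bound hp h0 hz hdeg hphi hc hadj.symm hcv

theorem dd_nonzero {a b : V} (hfrac : Frx x a b) :
    ∃ p q : V, Frx x p q ∧ dd pref x c s(p, q) ≠ 0 := by
  have hkey : ∃ v bb ww, VBest pref x v bb ∧ VWorst pref x v ww ∧ bb ≠ ww := by
    by_contra hcon
    push_neg at hcon
    obtain ⟨bb, hbb⟩ := exists_best hp hz ⟨b, hfrac⟩
    obtain ⟨ww, hww⟩ := exists_worst hp hz ⟨b, hfrac⟩
    have heq : bb = ww := hcon a bb ww hbb hww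
    have huniq : ∀ w, Frx x a w → w = bb := by
      intro w hw
      by_contra hne
      have h1 : pref a bb w := hbb.2 w hw hne
      have h2 : pref a w bb := (heq ▸ hww).2 w hw hne
      exact hp.irrefl a bb (hp.trans a bb w bb h1 h2)
    have hds := deg_split hp (frx_adj hz hbb.1) (fun w hxw =>
      Or.inl (huniq w (frac_pos_frx hp h0 hz hdeg hphi ⟨b, hfrac⟩ hxw)))
    have hps0 : pS pref x a bb = 0 := by
      apply Finset.sum_eq_zero
      intro w hw
      by_contra hxw
      have hwbb := huniq w (frac_pos_frx hp h0 hz hdeg hphi ⟨b, hfrac⟩ hxw)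
      exact hp.irrefl a bb (hwbb ▸ (Finset.mem_filter.mp hw).2)
    have hd1 : degSum G x a = 1 := frac_deg_one hp h0 hz hdeg hphi ⟨b, hfrac⟩
    exact hbb.1.2 (by linarith)
  obtain ⟨v, bb, ww, hbb, hww, hne⟩ := hkey
  refine ⟨v, bb, hbb.1, ?_⟩
  rw [dd_apply hp h0 hz hdeg hphi hc]
  unfold del
  rw [if_pos hbb,
    if_neg (fun h : VWorst pref x v bb => hne (worst_unique hp h hww))]
  split_ifs <;> norm_num

omit hp h0 hz hdeg hphi hc in
theorem dd_support {e : Sym2 V} (h : dd pref x c e ≠ 0) :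
    x e ≠ 0 ∧ x e ≠ 1 := by
  induction e using Sym2.ind with
  | _ a b =>
    rw [dd_mk] at h
    have hor : del pref x c a b ≠ 0 ∨ del pref x c b a ≠ 0 := by
      by_contra hc2
      push_neg at hc2
      rw [hc2.1, hc2.2] at h
      norm_num at h
    have hfr : ∀ p q : V, del pref x c p q ≠ 0 → Frx x p q := by
      intro p q hd
      by_cases h1 : VBest pref x p q
      · exact h1.1
      by_cases h2 : VWorst pref x p q
      · exact h2.1
      · exfalso
        apply hd
        unfold del
        rw [if_neg h1, if_neg h2]
        ring
    rcases hor with h | h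
    · exact hfr a b h
    · exact frx_symm (hfr b a h)

omit hp h0 hz hdeg hphi hc in
theorem dd_zero_of_not_edge {e : Sym2 V} (hz' : ∀ e, e ∉ G.edgeSet → x e = 0)
    (he : e ∉ G.edgeSet) : dd pref x c e = 0 := by
  induction e using Sym2.ind with
  | _ a b =>
    have hadj : ¬ G.Adj a b := fun h => he ((SimpleGraph.mem_edgeSet G).mpr h)
    rw [dd_mk, del_zero_of_not_adj hz' hadj,
      del_zero_of_not_adj hz' (fun h => hadj h.symm)]
    norm_num

end

section
open scoped Classical
variable {V : Type*} [Fintype V] [DecidableEq V]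

theorem degSum_linear (G : SimpleGraph V) (x y : Sym2 V → ℝ) (t : ℝ) (v : V) :
    degSum G (fun e => x e + t * y e) v = degSum G x v + t * degSum G y v := by
  unfold degSum
  rw [Finset.mul_sum, ← Finset.sum_add_distrib]
  apply Finset.sum_congr rfl
  intro e _
  by_cases h : v ∈ e
  · simp [h]
  · simp [h]

theorem phiSum_linear (G : SimpleGraph V) (pref : V → V → V → Prop)
    (x y : Sym2 V → ℝ) (t : ℝ) (u v : V) :
    phiSum G pref (fun e => x e + t * y e) u v
      = phiSum G pref x u v + t * phiSum G pref y u v := by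
  unfold phiSum
  rw [Finset.mul_sum, ← Finset.sum_add_distrib]
  apply Finset.sum_congr rfl
  intro e _
  by_cases h : e ∈ Phi G pref u v
  · simp [h]
  · simp [h]


variable {G : SimpleGraph V} {pref : V → V → V → Prop}

theorem stable_inFSM (hp : StrictPrefs G pref) {M : Set (Sym2 V)}
    (hM : IsStable G pref M) (x : Sym2 V → ℝ)
    (hxf : ∀ e, x e = if e ∈ M then 1 else 0) : InFSM G pref x := by
  obtain ⟨hmatch, hsub, hnb⟩ := hM
  have h0 : ∀ e, 0 ≤ x e := by
    intro e; rw [hxf]; split_ifs <;> norm_num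
  refine ⟨h0, ?_, ?_, ?_⟩
  · intro e he
    rw [hxf, if_neg (fun hem => he (hsub hem))]
  · intro v
    rw [degSum_eq]
    have hcong : ∀ u ∈ G.neighborFinset v,
        x s(v, u) = if s(v, u) ∈ M then (1:ℝ) else 0 := fun u _ => hxf _
    rw [Finset.sum_congr rfl hcong, sum_indicator_unique _ _ ?uniq]
    · split_ifs <;> norm_num
    case uniq =>
      intro a _ b _ haM hbM
      exact Sym2.congr_right.mp (hmatch _ haM _ hbM v (by simp) (by simp))
  · intro u v hadj
    have main : ∃ e₀, e₀ ∈ G.edgeFinset ∧ e₀ ∈ Phi G pref u v ∧ x e₀ = 1 := by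
      by_cases hin : s(u, v) ∈ M
      · exact ⟨s(u, v), SimpleGraph.mem_edgeFinset.mpr ((SimpleGraph.mem_edgeSet G).mpr hadj),
          ⟨(SimpleGraph.mem_edgeSet G).mpr hadj, Or.inl rfl⟩,
          by rw [hxf, if_pos hin]⟩
      · have hAB : ¬ ((∀ w, s(u, w) ∈ M → pref u v w) ∧
            (∀ w, s(v, w) ∈ M → pref v u w)) := by
          intro hAB'
          exact hnb u v ⟨hadj, hin, hAB'.1, hAB'.2⟩
        rcases not_and_or.mp hAB with hA | hA
        · push_neg at hA
          obtain ⟨w, hwM, hnp⟩ := hA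
          have hadjw : G.Adj u w := (SimpleGraph.mem_edgeSet G).mp (hsub hwM)
          have hwnv : w ≠ v := fun h => hin (h ▸ hwM)
          have hpwv : pref u w v := (hp.total u w v hadjw hadj hwnv).resolve_right hnp
          exact ⟨s(u, w), SimpleGraph.mem_edgeFinset.mpr ((SimpleGraph.mem_edgeSet G).mpr hadjw),
            ⟨(SimpleGraph.mem_edgeSet G).mpr hadjw, Or.inr (Or.inl ⟨w, rfl, hpwv⟩)⟩,
            by rw [hxf, if_pos hwM]⟩
        · push_neg at hA
          obtain ⟨w, hwM, hnp⟩ := hA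
          have hadjw : G.Adj v w := (SimpleGraph.mem_edgeSet G).mp (hsub hwM)
          have hwnu : w ≠ u := fun h => hin (by
            rw [Sym2.eq_swap]
            exact h ▸ hwM)
          have hpwu : pref v w u := (hp.total v w u hadjw hadj.symm hwnu).resolve_right hnp
          exact ⟨s(v, w), SimpleGraph.mem_edgeFinset.mpr ((SimpleGraph.mem_edgeSet G).mpr hadjw),
            ⟨(SimpleGraph.mem_edgeSet G).mpr hadjw, Or.inr (Or.inr ⟨w, rfl, hpwu⟩)⟩,
            by rw [hxf, if_pos hwM]⟩
    obtain ⟨e₀, he₀F, he₀P, he₀1⟩ := main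
    unfold phiSum
    have hle : (if e₀ ∈ Phi G pref u v then x e₀ else 0)
        ≤ ∑ e ∈ G.edgeFinset, if e ∈ Phi G pref u v then x e else 0 :=
      Finset.single_le_sum (f := fun e => if e ∈ Phi G pref u v then x e else 0) (fun e _ => by
        split_ifs with hP
        · exact h0 e
        · exact le_refl 0) he₀F
    rw [if_pos he₀P, he₀1] at hle
    exact hle

theorem inFSM_stable (hp : StrictPrefs G pref) {x : Sym2 V → ℝ}
    (h01 : ∀ e, x e = 0 ∨ x e = 1) (hx : InFSM G pref x) :
    ∃ M, IsStable G pref M ∧ ∀ e, x e = if e ∈ M then 1 else 0 := by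
  obtain ⟨h0, hz, hdeg, hphi⟩ := hx
  refine ⟨{e | x e = 1}, ⟨?_, ?_, ?_⟩, ?_⟩
  · -- matching
    intro e heM f hfM v hve hvf
    simp only [Set.mem_setOf_eq] at heM hfM
    by_contra hef
    have hp' : x s(v, Sym2.Mem.other' hve) = 1 := by
      rw [Sym2.other_spec' hve]; exact heM
    have hq' : x s(v, Sym2.Mem.other' hvf) = 1 := by
      rw [Sym2.other_spec' hvf]; exact hfM
    have hpq : Sym2.Mem.other' hve ≠ Sym2.Mem.other' hvf := by
      intro h
      apply hef
      rw [← Sym2.other_spec' hve, ← Sym2.other_spec' hvf, h]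
    have hadje : G.Adj v (Sym2.Mem.other' hve) := by
      rw [← SimpleGraph.mem_edgeSet, Sym2.other_spec' hve]
      by_contra h
      rw [hz e h] at heM
      norm_num at heM
    have hadjf : G.Adj v (Sym2.Mem.other' hvf) := by
      rw [← SimpleGraph.mem_edgeSet, Sym2.other_spec' hvf]
      by_contra h
      rw [hz f h] at hfM
      norm_num at hfM
    have := two_le_deg h0 hadje hadjf hpq
    have := hdeg v
    rw [hp', hq'] at *
    linarith
  · -- subset of edges
    intro e heM
    simp only [Set.mem_setOf_eq] at heM
    by_contra h
    rw [hz e h] at heM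
    norm_num at heM
  · -- no blocking pair
    intro u v hb
    obtain ⟨hadj, hnin, h3, h4⟩ := hb
    have h1 := hphi u v hadj
    have hwit : ∃ e, e ∈ Phi G pref u v ∧ x e = 1 := by
      by_contra hcon
      push_neg at hcon
      have hzero : phiSum G pref x u v = 0 := by
        unfold phiSum
        apply Finset.sum_eq_zero
        intro e _
        by_cases hP : e ∈ Phi G pref u v
        · rw [if_pos hP]
          rcases h01 e with h | h
          · exact h
          · exact absurd h (hcon e hP)
        · rw [if_neg hP]
      rw [hzero] at h1
      linarith
    obtain ⟨e₀, ⟨-, hcase⟩, he₀1⟩ := hwit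
    rcases hcase with heq | ⟨w, heq, hpw⟩ | ⟨w, heq, hpw⟩
    · exact hnin (by rw [← heq]; exact he₀1)
    · rw [heq] at he₀1
      have := h3 w he₀1
      exact hp.irrefl u w (hp.trans u w v w hpw this)
    · rw [heq] at he₀1
      have := h4 w he₀1
      exact hp.irrefl v w (hp.trans v w u w hpw this)
  · intro e
    simp only [Set.mem_setOf_eq]
    by_cases h : x e = 1
    · rw [if_pos h]; exact h
    · rw [if_neg h]
      exact (h01 e).resolve_right h


end
end VVR


open scoped Classical in
/-- Vande Vate–Rothblum: for a bipartite instance, every extreme point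
of `FSM(G,≺)` is integral, and the integral points of `FSM(G,≺)` are exactly the
incidence vectors of stable matchings. -/
theorem bipartite_FSM_integral (G : SimpleGraph V) (pref : V → V → V → Prop)
    (hpref : StrictPrefs G pref) (hbip : G.Colorable 2) :
    (∀ x ∈ Set.extremePoints ℝ {y : Sym2 V → ℝ | InFSM G pref y},
      ∀ e, x e = 0 ∨ x e = 1) ∧
    (∀ x : Sym2 V → ℝ, (∀ e, x e = 0 ∨ x e = 1) →
      (InFSM G pref x ↔ ∃ M, IsStable G pref M ∧
        ∀ e, x e = if e ∈ M then 1 else 0)) := by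
  constructor
  · -- extreme points are integral
    intro x hx e
    by_contra hfr
    push_neg at hfr
    have hxF : InFSM G pref x := hx.1
    obtain ⟨h0, hz, hdeg, hphi⟩ := hxF
    have hext := hx.2
    obtain ⟨C⟩ := hbip
    set c : V → Fin 2 := fun v => C v with hcdef
    have hc : ∀ a b, G.Adj a b → c a ≠ c b := fun a b h => C.valid h
    revert hfr
    induction e using Sym2.ind with
    | _ a b =>
    intro hfr
    obtain ⟨hx0, hx1⟩ := hfr
    have hfrab : VVR.Frx x a b := ⟨hx0, hx1⟩
    obtain ⟨p, q, hpq, hdpq⟩ := VVR.dd_nonzero hpref h0 hz hdeg hphi hc hfrab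
    -- ε₁ : minimum fractional value
    set FR : Finset (Sym2 V) := G.edgeFinset.filter (fun e => x e ≠ 0 ∧ x e ≠ 1) with hFR
    have hFRne : FR.Nonempty := ⟨s(a, b), Finset.mem_filter.mpr
      ⟨SimpleGraph.mem_edgeFinset.mpr ((SimpleGraph.mem_edgeSet G).mpr
        (VVR.frx_adj hz hfrab)), hfrab⟩⟩
    set ε₁ : ℝ := FR.inf' hFRne x with hε₁
    have hε₁pos : 0 < ε₁ := by
      rw [hε₁, Finset.lt_inf'_iff]
      intro e he
      exact lt_of_le_of_ne (h0 e) (Ne.symm (Finset.mem_filter.mp he).2.1)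
    -- ε₂ : slack of non-tight φ constraints
    set PR : Finset (V × V) := (Finset.univ ×ˢ Finset.univ).filter
      (fun pr => G.Adj pr.1 pr.2 ∧ phiSum G pref x pr.1 pr.2 ≠ 1) with hPR
    set ε₂ : ℝ := if hPRne : PR.Nonempty then
      PR.inf' hPRne (fun pr => (phiSum G pref x pr.1 pr.2 - 1) / 3) else 1 with hε₂
    have hε₂pos : 0 < ε₂ := by
      rw [hε₂]
      split_ifs with hPRne
      · rw [Finset.lt_inf'_iff]
        intro pr hpr
        have h1 := hphi pr.1 pr.2 (Finset.mem_filter.mp hpr).2.1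
        have h2 := (Finset.mem_filter.mp hpr).2.2
        have h3 : 1 < phiSum G pref x pr.1 pr.2 := lt_of_le_of_ne h1 (Ne.symm h2)
        linarith
      · norm_num
    set ε : ℝ := min ε₁ ε₂ with hεdef
    have hεpos : 0 < ε := lt_min hε₁pos hε₂pos
    have hymem : ∀ t : ℝ, |t| ≤ ε →
        InFSM G pref (fun e => x e + t * VVR.dd pref x c e) := by
      intro t ht
      refine ⟨?_, ?_, ?_, ?_⟩
      · intro e
        show 0 ≤ x e + t * VVR.dd pref x c e
        by_cases hde : VVR.dd pref x c e = 0
        · rw [hde, mul_zero, add_zero]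
          exact h0 e
        · have hfre := VVR.dd_support hde
          have heF : e ∈ FR := by
            rw [hFR]
            refine Finset.mem_filter.mpr ⟨?_, hfre⟩
            rw [SimpleGraph.mem_edgeFinset]
            by_contra h
            exact hfre.1 (hz e h)
          have hxe : ε₁ ≤ x e := Finset.inf'_le x heF
          have hd1 : |VVR.dd pref x c e| ≤ 1 := VVR.dd_bound pref x c e
          have habs : |t * VVR.dd pref x c e| ≤ ε := by
            rw [abs_mul]
            nlinarith [abs_nonneg t, abs_nonneg (VVR.dd pref x c e)]
          have hneg := neg_abs_le (t * VVR.dd pref x c e)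
          have hεle : ε ≤ ε₁ := min_le_left _ _
          linarith
      · intro e he
        show x e + t * VVR.dd pref x c e = 0
        rw [VVR.dd_zero_of_not_edge hz he, mul_zero, add_zero]
        exact hz e he
      · intro v
        rw [VVR.degSum_linear, VVR.degSum_dd_zero hpref h0 hz hdeg hphi hc v,
          mul_zero, add_zero]
        exact hdeg v
      · intro u v hadj
        rw [VVR.phiSum_linear]
        by_cases htight : phiSum G pref x u v = 1
        · rw [VVR.phiSum_dd_tight_zero' hpref h0 hz hdeg hphi hc hadj htight,
            mul_zero, add_zero, htight]
        · have hb3 := VVR.phiSum_dd_bound' hpref h0 hz hdeg hphi hc hadj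
          have hmemPR : (u, v) ∈ PR := by
            rw [hPR]
            exact Finset.mem_filter.mpr
              ⟨Finset.mem_product.mpr ⟨Finset.mem_univ u, Finset.mem_univ v⟩,
                hadj, htight⟩
          have hε₂le : ε₂ ≤ (phiSum G pref x u v - 1) / 3 := by
            rw [hε₂, dif_pos ⟨(u, v), hmemPR⟩]
            exact Finset.inf'_le _ hmemPR
          have habs : |t * phiSum G pref (VVR.dd pref x c) u v| ≤ ε * 3 := by
            rw [abs_mul]
            nlinarith [abs_nonneg t, abs_nonneg (phiSum G pref (VVR.dd pref x c) u v)]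
          have hneg := neg_abs_le (t * phiSum G pref (VVR.dd pref x c) u v)
          have hεle : ε ≤ ε₂ := min_le_right _ _
          have h3 : ε * 3 ≤ phiSum G pref x u v - 1 := by linarith
          linarith
    have hy₁ : (fun e => x e + ε * VVR.dd pref x c e) ∈ {y : Sym2 V → ℝ | InFSM G pref y} :=
      hymem ε (le_of_eq (abs_of_pos hεpos))
    have hy₂ : (fun e => x e + (-ε) * VVR.dd pref x c e) ∈ {y : Sym2 V → ℝ | InFSM G pref y} :=
      hymem (-ε) (by rw [abs_neg, abs_of_pos hεpos])
    have hseg : x ∈ openSegment ℝ (fun e => x e + ε * VVR.dd pref x c e)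
        (fun e => x e + (-ε) * VVR.dd pref x c e) := by
      refine ⟨1/2, 1/2, by norm_num, by norm_num, by norm_num, ?_⟩
      funext e
      simp only [Pi.add_apply, Pi.smul_apply, smul_eq_mul]
      ring
    have hcol := hext hy₁ hy₂ hseg
    have heq : x s(p, q) + ε * VVR.dd pref x c s(p, q) = x s(p, q) :=
      congrFun hcol s(p, q)
    have hzero : ε * VVR.dd pref x c s(p, q) = 0 := by linarith
    rcases mul_eq_zero.mp hzero with h | h
    · exact absurd h (ne_of_gt hεpos)
    · exact hdpq h
  · -- integral points are exactly stable matchings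
    intro x h01
    constructor
    · intro hx
      exact VVR.inFSM_stable hpref h01 hx
    · rintro ⟨M, hM, hxf⟩
      exact VVR.stable_inFSM hpref hM x hxf
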